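/- Let M = 2^(2λ) with λ ≥ 1 and set N = √M = 2^λ. Define ν : {0,…,N-1} → ℝ by ν(k) = -(N-1) + 2k, and label the square M-QAM signal set by x(I, p) = ν(I) + i·ν(p) for (I, p) ∈ {0,…,N-1}². Define f : ({0,…,N-1}²) × ({0,…,N-1}²) → ZMod N × ZMod N by f((I, p), (J, q)) = (I + J mod N, p + q mod N) (the doubly block circulant Latin square). Then: (i) f satisfies the exclusive law, i.e., f(u, v) ≠ f(u', v) whenever u ≠ u' and f(u, v) ≠ f(u, v') whenever v ≠ v'; and (ii) f removes the fade state z = 1, i.e., whenever x(I, p) + x(J, q) = x(I', p') + x(J', q') one has f((I, p), (J, q)) = f((I', p'), (J', q')). -/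

import Mathlib

/-- For the square `M`-QAM signal set (`M = 2^(2λ)`, `N = √M = 2^λ`)
labeled by `x(I, p) = ν(I) + i·ν(p)` where `ν(k) = -(N-1) + 2k`, the doubly block
circulant Latin square `f((I,p), (J,q)) = (I + J mod N, p + q mod N)` (i) satisfies
the exclusive law (injective in each argument) and (ii) removes the fade state
`z = 1`: whenever `x(I,p) + x(J,q) = x(I',p') + x(J',q')` one has
`f((I,p),(J,q)) = f((I',p'),(J',q'))`. -/
theorem qam_doubly_block_circulant_latin_square (l N : ℕ) (hl : 1 ≤ l)
    (hN : N = 2 ^ l)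
    (ν : Fin N → ℝ) (hν : ∀ k : Fin N, ν k = -((N : ℝ) - 1) + 2 * ((k : ℕ) : ℝ))
    (x : Fin N × Fin N → ℂ)
    (hx : ∀ u : Fin N × Fin N, x u = (ν u.1 : ℂ) + Complex.I * (ν u.2 : ℂ))
    (f : Fin N × Fin N → Fin N × Fin N → ZMod N × ZMod N)
    (hf : ∀ u v : Fin N × Fin N,
      f u v = (((u.1 : ℕ) : ZMod N) + ((v.1 : ℕ) : ZMod N),
               ((u.2 : ℕ) : ZMod N) + ((v.2 : ℕ) : ZMod N))) :
    ((∀ u u' v : Fin N × Fin N, u ≠ u' → f u v ≠ f u' v) ∧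
     (∀ u v v' : Fin N × Fin N, v ≠ v' → f u v ≠ f u v')) ∧
    (∀ u v u' v' : Fin N × Fin N, x u + x v = x u' + x v' → f u v = f u' v') := by
  have hNpos : 0 < N := hN ▸ (Nat.pow_pos (by norm_num : 0 < 2) : 0 < 2 ^ l)
  haveI : NeZero N := ⟨hNpos.ne'⟩
  have hinj : ∀ a b : Fin N, ((a : ℕ) : ZMod N) = ((b : ℕ) : ZMod N) → a = b := by
    intro a b h
    have := congrArg ZMod.val h
    rw [ZMod.val_cast_of_lt a.isLt, ZMod.val_cast_of_lt b.isLt, ] at this; exact Fin.val_injective this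
  refine ⟨⟨?_, ?_⟩, ?_⟩
  · intro u u' v hne h
    rw [hf, hf, Prod.mk.injEq] at h
    apply hne
    have h1 := add_right_cancel h.1
    have h2 := add_right_cancel h.2
    exact Prod.ext (hinj _ _ h1) (hinj _ _ h2)
  · intro u v v' hne h
    rw [hf, hf, Prod.mk.injEq] at h
    apply hne
    have h1 := add_left_cancel h.1
    have h2 := add_left_cancel h.2
    exact Prod.ext (hinj _ _ h1) (hinj _ _ h2)
  · intro u v u' v' h
    rw [hx, hx, hx, hx] at h
    have hre := congrArg Complex.re h
    have him := congrArg Complex.im h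
    simp [Complex.add_re, Complex.add_im, Complex.mul_re, Complex.mul_im,
      Complex.I_re, Complex.I_im] at hre him
    rw [hν, hν, hν, hν] at hre him
    have e1 : ((u.1 : ℕ) : ℝ) + ((v.1 : ℕ) : ℝ) = ((u'.1 : ℕ) : ℝ) + ((v'.1 : ℕ) : ℝ) := by
      linarith
    have e2 : ((u.2 : ℕ) : ℝ) + ((v.2 : ℕ) : ℝ) = ((u'.2 : ℕ) : ℝ) + ((v'.2 : ℕ) : ℝ) := by
      linarith
    have n1 : (u.1 : ℕ) + (v.1 : ℕ) = (u'.1 : ℕ) + (v'.1 : ℕ) := by exact_mod_cast e1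
    have n2 : (u.2 : ℕ) + (v.2 : ℕ) = (u'.2 : ℕ) + (v'.2 : ℕ) := by exact_mod_cast e2
    rw [hf, hf]
    have c1 : ((u.1 : ℕ) : ZMod N) + ((v.1 : ℕ) : ZMod N) = ((u'.1 : ℕ) : ZMod N) + ((v'.1 : ℕ) : ZMod N) := by
      rw [← Nat.cast_add, ← Nat.cast_add, n1]
    have c2 : ((u.2 : ℕ) : ZMod N) + ((v.2 : ℕ) : ZMod N) = ((u'.2 : ℕ) : ZMod N) + ((v'.2 : ℕ) : ZMod N) := by
      rw [← Nat.cast_add, ← Nat.cast_add, n2]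
    exact Prod.ext c1 c2
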